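/- Let S be an arc of F_q^k with |S| ≥ k and let t = q+k−1−|S|. Then the number of co-secants to S is exactly binom(|S|, k−2)·t. -/

import Mathlib

open Finset

variable {F : Type*} [Field F]

/-- An *arc*: every `k`-subset is a set of linearly independent vectors
(hence a basis of `F^k`). -/
def IsArc {k : ℕ} (S : Set (Fin k → F)) : Prop :=
  ∀ T : Finset (Fin k → F), ↑T ⊆ S → T.card = k →
    LinearIndependent F (Subtype.val : {x // x ∈ T} → (Fin k → F))

/-- The *weight* of a vector: its number of nonzero coordinates. -/
noncomputable def weight {ι : Type*} (w : ι → F) : ℕ := Nat.card {i // w i ≠ 0}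

/-- `det(u, C)`: the determinant of the `k × k` matrix whose first row is `u` and whose
remaining rows are the vectors `g i`, `i ∈ C`, listed in increasing order of the index set. -/
noncomputable def detWith {k m : ℕ} (g : Fin m → Fin k → F)
    (u : Fin k → F) (C : Finset (Fin m)) : F :=
  if h : C.card + 1 = k then
    Matrix.det (Matrix.of ((Fin.cons u fun j => g (C.orderEmbOfFin rfl j)) ∘ Fin.cast h.symm))
  else 0

/-- The matrix `M_n` associated to an ordered arc `g : Fin m → (Fin k → F)`. -/
noncomputable def arcMatrix {k m : ℕ} (g : Fin m → Fin k → F) (n : ℕ) :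
    Matrix {C : Finset (Fin m) // C.card = k - 1}
      {AE : Finset (Fin m) × Finset (Fin m) //
        AE.2.card = m - n ∧ AE.1 ⊆ AE.2 ∧ AE.1.card = k - 2} F :=
  fun C AE =>
    if AE.1.1 ⊆ C.1 then ∏ u ∈ Finset.univ \ AE.1.2, detWith g (g u) C.1 else 0

/-- `det(z, Y₁, …, Y_{k-1})`. -/
noncomputable def detRows {k : ℕ} (z : Fin k → F) (Y : Fin (k - 1) → Fin k → F) : F :=
  if h : k - 1 + 1 = k then Matrix.det (Matrix.of ((Fin.cons z Y) ∘ Fin.cast h.symm)) else 0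

/-- `d_A(u,v) = det(u, v, p₁, …, p_{k-2})` for an ordered tuple `A = (p₁, …, p_{k-2})`. -/
noncomputable def dA {k : ℕ} (p : Fin (k - 2) → Fin k → F) (u v : Fin k → F) : F :=
  if h : k - 2 + 1 + 1 = k then
    Matrix.det (Matrix.of ((Fin.cons u (Fin.cons v p)) ∘ Fin.cast h.symm))
  else 0

/-- `f` is a tangent polynomial for the `(k-2)`-subset `A` of the arc `S`:
a product of `t` pairwise linearly independent linear forms whose kernels meet `S` in `A`. -/
def IsTangentPoly {k : ℕ} (t : ℕ) (S A : Set (Fin k → F)) (f : (Fin k → F) → F) : Prop :=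
  ∃ α : Fin t → ((Fin k → F) →ₗ[F] F),
    (∀ i j, i ≠ j → LinearIndependent F ![α i, α j]) ∧
    (∀ i, S ∩ {x | α i x = 0} = A) ∧
    ∀ x, f x = ∏ i, α i x

/-- Compatible families `(α_A)` (on `(k-2)`-subsets) and `(α_C)` (on `(k-1)`-subsets)
of nonzero scalars, relative to the tangent polynomials `f`. -/
def CompatibleFamilies {k m : ℕ} (t : ℕ) (g : Fin m → Fin k → F)
    (f : Finset (Fin m) → (Fin k → F) → F) (a c : Finset (Fin m) → F) : Prop :=
  (∀ A : Finset (Fin m), A.card = k - 2 → a A ≠ 0) ∧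
  (∀ C : Finset (Fin m), C.card = k - 1 → c C ≠ 0) ∧
  ∀ A : Finset (Fin m), A.card = k - 2 → ∀ e, e ∉ A →
    c (insert e A) =
      (-1 : F) ^ ((A.filter fun i => e < i).card * (t + 1)) * a A * f A (g e)

/-- The polynomial `φ(Y₁, …, Y_{k-1}) = Σ_C (α_C)^e ∏_{z ∈ E∖C} det(z,Y)/det(z,C)`. -/
noncomputable def phiPoly {k M : ℕ} (e : ℕ) (g : Fin M → Fin k → F)
    (c : Finset (Fin M) → F) (E : Finset (Fin M)) (Y : Fin (k - 1) → Fin k → F) : F :=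
  ∑ C ∈ E.powersetCard (k - 1), (c C) ^ e *
    ∏ z ∈ E \ C, detRows (g z) Y / detWith g (g z) C

/-- `(G, n)` has *Property W*. -/
def PropertyW {k m : ℕ} (g : Fin m → Fin k → F) (n : ℕ) : Prop :=
  ∀ A : Finset (Fin m), A.card = k - 2 →
    ∃ (C : Finset (Fin m)) (Cs : Fin (m - n - k + 1) → Finset (Fin m)),
      C.card = k - 1 ∧ A ⊆ C ∧
      (∀ i, (Cs i).card = k - 1 ∧ A ⊆ Cs i ∧ Cs i ≠ C) ∧
      Function.Injective Cs ∧
      ∀ i, ∃ x, ∀ D : {C : Finset (Fin m) // C.card = k - 1},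
        ((arcMatrix g n).mulVec x) D ≠ 0 ↔ (D.1 = C ∨ D.1 = Cs i)

section Aux

instance (priority := 100) submoduleFinite {V : Type*} [AddCommGroup V] [Module F V]
    [Finite V] : Finite (Submodule F V) :=
  Finite.of_injective (fun p => (p : Set V)) SetLike.coe_injective

lemma nat_card_sigma' {ι : Type*} [Fintype ι] (f : ι → Type*) [∀ i, Finite (f i)] :
    Nat.card (Σ i, f i) = ∑ i, Nat.card (f i) := by
  letI : ∀ i, Fintype (f i) := fun i => Fintype.ofFinite _
  simp [Nat.card_eq_fintype_card, Fintype.card_sigma]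

lemma card_one_dim (V' : Type*) [AddCommGroup V'] [Module F V'] [Finite V'] [Fintype F]
    (h2 : Module.finrank F V' = 2) :
    Nat.card {L : Submodule F V' // Module.finrank F L = 1} = Fintype.card F + 1 := by
  classical
  letI : Fintype V' := Fintype.ofFinite _
  haveI : Module.Finite F V' := Module.Finite.of_finite
  have hq2 : 2 ≤ Fintype.card F := Fintype.one_lt_card
  let e : {v : V' // v ≠ 0} ≃
      Σ L : {L : Submodule F V' // Module.finrank F L = 1}, {v : V' // v ∈ L.1 ∧ v ≠ 0} :=
    { toFun := fun v => ⟨⟨Submodule.span F {v.1}, finrank_span_singleton v.2⟩,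
        ⟨v.1, Submodule.mem_span_singleton_self _, v.2⟩⟩
      invFun := fun p => ⟨p.2.1, p.2.2.2⟩
      left_inv := fun v => rfl
      right_inv := by
        rintro ⟨⟨L, hL⟩, ⟨v, hv, hv0⟩⟩
        have hs : Submodule.span F {v} = L :=
          Submodule.eq_of_le_of_finrank_eq ((Submodule.span_singleton_le_iff_mem _ _).2 hv)
            (by rw [finrank_span_singleton hv0, hL])
        subst hs
        rfl }
  have h1 : Nat.card {v : V' // v ≠ 0} = Fintype.card F ^ 2 - 1 := by
    rw [Nat.card_eq_fintype_card]
    have hc := Fintype.card_subtype_compl (fun v : V' => v = 0)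
    rw [Fintype.card_subtype_eq] at hc
    rw [hc, Module.card_eq_pow_finrank (K := F) (V := V'), h2]
  have h3 : ∀ L : {L : Submodule F V' // Module.finrank F L = 1},
      Nat.card {v : V' // v ∈ L.1 ∧ v ≠ 0} = Fintype.card F - 1 := by
    rintro ⟨L, hL⟩
    have e2 : {v : V' // v ∈ L ∧ v ≠ 0} ≃ {x : L // ¬(x = 0)} :=
    { toFun := fun v => ⟨⟨v.1, v.2.1⟩, fun h => v.2.2 (by simpa [Subtype.ext_iff] using h)⟩
      invFun := fun x => ⟨x.1.1, x.1.2, fun h => x.2 (Subtype.ext h)⟩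
      left_inv := fun v => rfl
      right_inv := fun x => rfl }
    rw [Nat.card_congr e2, Nat.card_eq_fintype_card, Fintype.card_subtype_compl,
      Fintype.card_subtype_eq]
    rw [Module.card_eq_pow_finrank (K := F) (V := L), hL, pow_one]
  have key : Nat.card {L : Submodule F V' // Module.finrank F L = 1} * (Fintype.card F - 1) = Fintype.card F ^ 2 - 1 := by
    rw [← h1, Nat.card_congr e, nat_card_sigma']
    simp only [h3]
    rw [Finset.sum_const, Finset.card_univ, smul_eq_mul, Nat.card_eq_fintype_card]
  obtain ⟨m, hm⟩ : ∃ m, Fintype.card F = m + 2 := ⟨Fintype.card F - 2, by omega⟩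
  rw [hm] at key ⊢
  have hm : (m + 2) ^ 2 - 1 = (m + 3) * (m + 1) := by
    have : (m + 2) ^ 2 = (m + 3) * (m + 1) + 1 := by ring
    omega
  rw [hm] at key
  have : m + 2 - 1 = m + 1 := by omega
  rw [this] at key
  have := Nat.eq_of_mul_eq_mul_right (show 0 < m + 1 by omega) key
  omega

end Aux

section Aux2

lemma finrank_comap_mkQ {V : Type*} [AddCommGroup V] [Module F V] [FiniteDimensional F V]
    (W : Submodule F V) (L : Submodule F (V ⧸ W)) :
    Module.finrank F (L.comap W.mkQ) = Module.finrank F L + Module.finrank F W := by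
  have h := LinearMap.finrank_range_add_finrank_ker (W.mkQ.domRestrict (L.comap W.mkQ))
  rw [LinearMap.range_domRestrict, Submodule.map_comap_eq, Submodule.range_mkQ, top_inf_eq,
    LinearMap.ker_domRestrict, Submodule.ker_mkQ] at h
  rw [(Submodule.comapSubtypeEquivOfLe (Submodule.le_comap_mkQ W L)).finrank_eq] at h
  omega

lemma card_hyp [Fintype F] {k : ℕ} (hk : 3 ≤ k) (W : Submodule F (Fin k → F))
    (hW : Module.finrank F W = k - 2) :
    Nat.card {H : Submodule F (Fin k → F) // Module.finrank F H = k - 1 ∧ W ≤ H}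
      = Fintype.card F + 1 := by
  have hquot : Module.finrank F ((Fin k → F) ⧸ W) = 2 := by
    have h := Submodule.finrank_quotient_add_finrank W
    rw [Module.finrank_fin_fun, hW] at h; omega
  let e : {L : Submodule F ((Fin k → F) ⧸ W) // Module.finrank F L = 1} ≃
      {H : Submodule F (Fin k → F) // Module.finrank F H = k - 1 ∧ W ≤ H} :=
  { toFun := fun L => ⟨L.1.comap W.mkQ,
      by rw [finrank_comap_mkQ, L.2, hW]; omega, Submodule.le_comap_mkQ _ _⟩
    invFun := fun H => ⟨H.1.map W.mkQ, by
      have h1 : (H.1.map W.mkQ).comap W.mkQ = H.1 := by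
        rw [Submodule.comap_map_mkQ, sup_eq_right.2 H.2.2]
      have h2 := finrank_comap_mkQ (F := F) W (H.1.map W.mkQ)
      rw [h1, H.2.1, hW] at h2; omega⟩
    left_inv := fun L => Subtype.ext (by
      simp only [Submodule.map_comap_eq, Submodule.range_mkQ, top_inf_eq])
    right_inv := fun H => Subtype.ext (by
      simp only [Submodule.comap_map_mkQ, sup_eq_right.2 H.2.2]) }
  rw [← Nat.card_congr e, card_one_dim _ hquot]

lemma arc_indep {k : ℕ} {S T : Finset (Fin k → F)} (hS : IsArc (↑S : Set (Fin k → F)))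
    (hSk : k ≤ S.card) (hTS : T ⊆ S) (hT : T.card ≤ k) :
    LinearIndependent F (Subtype.val : {x // x ∈ T} → (Fin k → F)) := by
  obtain ⟨T', hTT', hT'S, hT'⟩ := Finset.exists_subsuperset_card_eq hTS hT hSk
  have h := hS T' (Finset.coe_subset.2 hT'S) hT'
  exact LinearIndepOn.mono (v := id) (s := (↑T' : Set (Fin k → F))) h (Finset.coe_subset.2 hTT')

lemma arc_not_in_hyp {k : ℕ} {S T : Finset (Fin k → F)} (hS : IsArc (↑S : Set (Fin k → F)))
    (hk : 3 ≤ k) (hSk : k ≤ S.card) (hTS : T ⊆ S) (hT : T.card = k)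
    (H : Submodule F (Fin k → F)) (hH : Module.finrank F H = k - 1)
    (hsub : ∀ x ∈ T, x ∈ H) : False := by
  have hind := arc_indep hS hSk hTS hT.le
  have hspan : Submodule.span F (↑T : Set (Fin k → F)) ≤ H :=
    Submodule.span_le.2 (fun x hx => hsub x hx)
  have h1 : Module.finrank F (Submodule.span F (↑T : Set (Fin k → F))) = k := by
    have := finrank_span_finset_eq_card hind
    unfold Set.finrank at this
    rw [this, hT]

  have h2 := Submodule.finrank_mono hspan
  rw [h1, hH] at h2
  omega

end Aux2

lemma card_fiber [Fintype F] {k : ℕ} (hk : 3 ≤ k) (S : Finset (Fin k → F))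
    (hS : IsArc (↑S : Set (Fin k → F))) (hSk : k ≤ S.card)
    (A : Finset (Fin k → F)) (hAS : A ⊆ S) (hA : A.card = k - 2) :
    Nat.card {H : Submodule F (Fin k → F) //
        Module.finrank F H = k - 1 ∧ (↑S ∩ ↑H : Set (Fin k → F)) = ↑A}
      = Fintype.card F + k - 1 - S.card := by
  classical
  have hAk : A.card ≤ k := by omega
  have hindA := arc_indep hS hSk hAS hAk
  set W := Submodule.span F (↑A : Set (Fin k → F)) with hWdef
  have hW : Module.finrank F W = k - 2 := by
    have := finrank_span_finset_eq_card hindA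
    unfold Set.finrank at this
    rw [hWdef, this, hA]
  have hAW : (↑A : Set (Fin k → F)) ⊆ (W : Set (Fin k → F)) := Submodule.subset_span
  have hspanrank : ∀ s : Fin k → F, s ∈ S → s ∉ A →
      Module.finrank F (Submodule.span F (↑(insert s A) : Set (Fin k → F))) = k - 1 := by
    intro s hsS hsA
    have hcard : (insert s A).card = k - 1 := by
      rw [Finset.card_insert_of_notMem hsA, hA]; omega
    have hsub : insert s A ⊆ S := Finset.insert_subset hsS hAS
    have hind := arc_indep hS hSk hsub (by omega)
    have := finrank_span_finset_eq_card hind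
    unfold Set.finrank at this
    rw [this, hcard]
  let e1 : {H : Submodule F (Fin k → F) //
        (Module.finrank F H = k - 1 ∧ W ≤ H) ∧ (↑S ∩ ↑H : Set (Fin k → F)) = ↑A}
      ⊕ {H : Submodule F (Fin k → F) //
        (Module.finrank F H = k - 1 ∧ W ≤ H) ∧ ¬((↑S ∩ ↑H : Set (Fin k → F)) = ↑A)}
      ≃ {H : Submodule F (Fin k → F) // Module.finrank F H = k - 1 ∧ W ≤ H} :=
    (Equiv.sumCongr (Equiv.subtypeSubtypeEquivSubtypeInter _ _).symm
      (Equiv.subtypeSubtypeEquivSubtypeInter _ _).symm).trans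
      (Equiv.sumCompl fun H : {H : Submodule F (Fin k → F) //
        Module.finrank F H = k - 1 ∧ W ≤ H} => (↑S ∩ ↑H.1 : Set (Fin k → F)) = ↑A)
  have fact1 : ∀ H : Submodule F (Fin k → F),
      (↑S ∩ ↑H : Set (Fin k → F)) = ↑A → W ≤ H := by
    intro H hH
    rw [hWdef]
    apply Submodule.span_le.2
    intro x hx
    have : x ∈ (↑S ∩ ↑H : Set (Fin k → F)) := hH ▸ hx
    exact this.2
  let e2 : {H : Submodule F (Fin k → F) //
        (Module.finrank F H = k - 1 ∧ W ≤ H) ∧ (↑S ∩ ↑H : Set (Fin k → F)) = ↑A}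
      ≃ {H : Submodule F (Fin k → F) //
        Module.finrank F H = k - 1 ∧ (↑S ∩ ↑H : Set (Fin k → F)) = ↑A} :=
    Equiv.subtypeEquivRight fun H =>
      ⟨fun h => ⟨h.1.1, h.2⟩, fun h => ⟨⟨h.1, fact1 H h.2⟩, h.2⟩⟩
  have hφprop : ∀ s : Fin k → F, s ∈ S → s ∉ A →
      (Module.finrank F (Submodule.span F (↑(insert s A) : Set (Fin k → F))) = k - 1 ∧
        W ≤ Submodule.span F (↑(insert s A) : Set (Fin k → F))) ∧
      ¬((↑S ∩ ↑(Submodule.span F (↑(insert s A) : Set (Fin k → F))) : Set (Fin k → F)) = ↑A) := by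
    intro s hsS hsA
    refine ⟨⟨hspanrank s hsS hsA, ?_⟩, ?_⟩
    · rw [hWdef]
      exact Submodule.span_mono (Finset.coe_subset.2 (Finset.subset_insert _ _))
    · intro hEq
      have hsmem : s ∈ (↑S ∩ ↑(Submodule.span F (↑(insert s A) : Set (Fin k → F))) :
          Set (Fin k → F)) :=
        ⟨Finset.mem_coe.2 hsS,
          Submodule.subset_span (Finset.mem_coe.2 (Finset.mem_insert_self _ _))⟩
      rw [hEq] at hsmem
      exact hsA (Finset.mem_coe.1 hsmem)
  let φ : {x : Fin k → F // x ∈ S \ A} → {H : Submodule F (Fin k → F) //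
      (Module.finrank F H = k - 1 ∧ W ≤ H) ∧ ¬((↑S ∩ ↑H : Set (Fin k → F)) = ↑A)} :=
    fun s => ⟨Submodule.span F (↑(insert s.1 A) : Set (Fin k → F)),
      hφprop s.1 (Finset.mem_sdiff.1 s.2).1 (Finset.mem_sdiff.1 s.2).2⟩
  have hφbij : Function.Bijective φ := by
    constructor
    · rintro ⟨s, hsmem⟩ ⟨s', hsmem'⟩ hEq
      by_contra hne
      have hss' : s ≠ s' := fun h => hne (Subtype.ext h)
      have hs := Finset.mem_sdiff.1 hsmem
      have hs' := Finset.mem_sdiff.1 hsmem'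
      have hEq' : Submodule.span F (↑(insert s A) : Set (Fin k → F)) =
          Submodule.span F (↑(insert s' A) : Set (Fin k → F)) := congrArg Subtype.val hEq
      have hcard : (insert s (insert s' A)).card = k := by
        rw [Finset.card_insert_of_notMem, Finset.card_insert_of_notMem hs'.2, hA]
        · omega
        · simp only [Finset.mem_insert]
          rintro (h | h)
          · exact hss' h
          · exact hs.2 h
      refine arc_not_in_hyp hS hk hSk ?_ hcard
        (Submodule.span F (↑(insert s A) : Set (Fin k → F))) (hspanrank s hs.1 hs.2) ?_
      · exact Finset.insert_subset hs.1 (Finset.insert_subset hs'.1 hAS)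
      · intro x hx
        rcases Finset.mem_insert.1 hx with rfl | hx'
        · exact Submodule.subset_span (Finset.mem_coe.2 (Finset.mem_insert_self _ _))
        · rcases Finset.mem_insert.1 hx' with rfl | hx''
          · rw [hEq']
            exact Submodule.subset_span (Finset.mem_coe.2 (Finset.mem_insert_self _ _))
          · exact Submodule.subset_span (Finset.mem_coe.2 (Finset.mem_insert_of_mem hx''))
    · rintro ⟨H, ⟨hHr, hWH⟩, hnQQ⟩
      have hsub : (↑A : Set (Fin k → F)) ⊆ (↑S ∩ ↑H : Set (Fin k → F)) :=
        Set.subset_inter (Finset.coe_subset.2 hAS) (hAW.trans hWH)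
      obtain ⟨s, hsSH, hsA⟩ := Set.exists_of_ssubset
        (HasSubset.Subset.ssubset_of_ne hsub (fun h => hnQQ h.symm))
      have hsS : s ∈ S := Finset.mem_coe.1 hsSH.1
      have hsA' : s ∉ A := fun h => hsA (Finset.mem_coe.2 h)
      refine ⟨⟨s, Finset.mem_sdiff.2 ⟨hsS, hsA'⟩⟩, Subtype.ext ?_⟩
      show Submodule.span F (↑(insert s A) : Set (Fin k → F)) = H
      apply Submodule.eq_of_le_of_finrank_eq
      · apply Submodule.span_le.2
        intro x hx
        rcases Finset.mem_insert.1 (Finset.mem_coe.1 hx) with rfl | h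
        · exact hsSH.2
        · exact hWH (hAW (Finset.mem_coe.2 h))
      · rw [hspanrank s hsS hsA', hHr]
  have hT : Nat.card {H : Submodule F (Fin k → F) //
      Module.finrank F H = k - 1 ∧ W ≤ H} = Fintype.card F + 1 := card_hyp hk W hW
  have hsum := Nat.card_congr e1
  rw [Nat.card_sum] at hsum
  have hrest : Nat.card {H : Submodule F (Fin k → F) //
      (Module.finrank F H = k - 1 ∧ W ≤ H) ∧ ¬((↑S ∩ ↑H : Set (Fin k → F)) = ↑A)}
      = S.card - (k - 2) := by
    rw [← Nat.card_congr (Equiv.ofBijective φ hφbij), Nat.card_eq_fintype_card,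
      Fintype.card_coe, Finset.card_sdiff_of_subset hAS, hA]
  have hfib := Nat.card_congr e2
  rw [hT, hrest] at hsum
  rw [← hfib]
  omega

theorem stmt2 [Fintype F] {k : ℕ} (hk : 3 ≤ k)
    (S : Finset (Fin k → F)) (hS : IsArc (↑S : Set (Fin k → F))) (hSk : k ≤ S.card) :
    Nat.card {H : Submodule F (Fin k → F) //
        Module.finrank F H = k - 1 ∧ ((↑S : Set (Fin k → F)) ∩ ↑H).ncard = k - 2}
      = S.card.choose (k - 2) * (Fintype.card F + k - 1 - S.card) := by
  classical
  let f : {H : Submodule F (Fin k → F) //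
      Module.finrank F H = k - 1 ∧ ((↑S : Set (Fin k → F)) ∩ ↑H).ncard = k - 2}
      → {A : Finset (Fin k → F) // A ∈ S.powersetCard (k - 2)} := fun H =>
    ⟨S.filter (fun x => x ∈ H.1), by
      rw [Finset.mem_powersetCard]
      refine ⟨Finset.filter_subset _ _, ?_⟩
      have hcoe : (↑(S.filter (fun x => x ∈ H.1)) : Set (Fin k → F))
          = (↑S : Set (Fin k → F)) ∩ ↑H.1 := by
        ext x
        simp [Finset.mem_filter]
      have h2 := H.2.2
      rw [← hcoe, Set.ncard_coe_finset] at h2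
      exact h2⟩
  have hfib : ∀ A, Nat.card {H // f H = A} = Fintype.card F + k - 1 - S.card := by
    rintro ⟨A, hA⟩
    obtain ⟨hA1, hA2⟩ := Finset.mem_powersetCard.1 hA
    have hcoe : ∀ H : Submodule F (Fin k → F),
        (↑(S.filter (fun x => x ∈ H)) : Set (Fin k → F))
          = (↑S : Set (Fin k → F)) ∩ ↑H := by
      intro H; ext x; simp [Finset.mem_filter]
    have e : {H // f H = ⟨A, hA⟩} ≃ {H : Submodule F (Fin k → F) //
        Module.finrank F H = k - 1 ∧ (↑S ∩ ↑H : Set (Fin k → F)) = ↑A} :=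
      { toFun := fun H => ⟨H.1.1, H.1.2.1, by
          have h : S.filter (fun x => x ∈ H.1.1) = A := congrArg Subtype.val H.2
          rw [← hcoe H.1.1, h]⟩
        invFun := fun H => ⟨⟨H.1, H.2.1, by rw [H.2.2, Set.ncard_coe_finset, hA2]⟩,
          Subtype.ext (Finset.coe_injective (by rw [hcoe, H.2.2]))⟩
        left_inv := fun H => Subtype.ext (Subtype.ext rfl)
        right_inv := fun H => rfl }
    rw [Nat.card_congr e, card_fiber hk S hS hSk A hA1 hA2]
  rw [← Nat.card_congr (Equiv.sigmaFiberEquiv f), nat_card_sigma']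
  simp only [hfib]
  rw [Finset.sum_const, Finset.card_univ, Fintype.card_coe, Finset.card_powersetCard,
    smul_eq_mul]
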